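/- arXiv:1109.6180 — 2 statements merged into one kernel-verified Lean document; each statement's English description precedes it below -/
import Mathlib

section
/- Let p be an odd prime. With respect to the lexicographic monomial order on F[x,y] with x > y, the ideal generated by the leading monomials of the nonzero elements of the Hilbert ideal I_H equals the ideal generated by xy, x^p and y^{p+1}, and this generating set is minimal. In particular, every Gröbner basis of I_H with respect to this order contains an element of degree p + 1. -/
open MvPolynomial

noncomputable section

/-- The algebra automorphism `σ` of `F[x,y]` swapping `x = X 0` and `y = X 1`. -/
def sig2 (F : Type*) [Field F] : MvPolynomial (Fin 2) F →ₐ[F] MvPolynomial (Fin 2) F :=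
  aeval ![X 1, X 0]

/-- The algebra endomorphism `ρ` of `F[x,y]` with `ρ(x) = λ·x` and `ρ(y) = λ⁻¹·y`. -/
def rho2 (F : Type*) [Field F] (lam : F) :
    MvPolynomial (Fin 2) F →ₐ[F] MvPolynomial (Fin 2) F :=
  aeval ![C lam * X 0, C lam⁻¹ * X 1]

/-- The Hilbert ideal of the dihedral action on `F[x,y]`: the ideal generated by the
`G`-invariant polynomials of positive degree (equivalently, with zero constant term). -/
def HilbertIdeal2 (F : Type*) [Field F] (lam : F) : Ideal (MvPolynomial (Fin 2) F) :=
  Ideal.span {f | sig2 F f = f ∧ rho2 F lam f = f ∧ constantCoeff f = 0}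

/-- The exponent of the leading monomial of `f` with respect to the monomial order `mo`. -/
def lmExp {σ F : Type*} [CommSemiring F] (mo : MonomialOrder σ) (f : MvPolynomial σ F) :
    σ →₀ ℕ :=
  mo.toSyn.symm (f.support.sup fun d => mo.toSyn d)

/-! ### Auxiliary lemmas -/

section Aux

variable {F : Type*} [Field F] {p : ℕ} {lam : F}

/-- swap of an exponent vector -/
def swap2 (d : Fin 2 →₀ ℕ) : Fin 2 →₀ ℕ :=
  Finsupp.single 0 (d 1) + Finsupp.single 1 (d 0)

@[simp] lemma swap2_apply0 (d : Fin 2 →₀ ℕ) : swap2 d 0 = d 1 := by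
  simp [swap2, Finsupp.single_apply]

@[simp] lemma swap2_apply1 (d : Fin 2 →₀ ℕ) : swap2 d 1 = d 0 := by
  simp [swap2, Finsupp.single_apply]

lemma fin2_finsupp_ext {d e : Fin 2 →₀ ℕ} (h0 : d 0 = e 0) (h1 : d 1 = e 1) : d = e := by
  ext m
  fin_cases m
  · exact h0
  · exact h1

lemma fin2_le {d e : Fin 2 →₀ ℕ} (h0 : d 0 ≤ e 0) (h1 : d 1 ≤ e 1) : d ≤ e := by
  rw [Finsupp.le_def]
  intro i
  fin_cases i
  · exact h0
  · exact h1

@[simp] lemma swap2_swap2 (d : Fin 2 →₀ ℕ) : swap2 (swap2 d) = d :=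
  fin2_finsupp_ext (by simp) (by simp)

lemma sig2_monomial (d : Fin 2 →₀ ℕ) (c : F) :
    sig2 F (monomial d c) = monomial (swap2 d) c := by
  rw [sig2, aeval_monomial, monomial_eq,
    Finsupp.prod_fintype _ _ (fun i => pow_zero _),
    Finsupp.prod_fintype _ _ (fun i => pow_zero _)]
  simp only [Fin.prod_univ_two, Matrix.cons_val_zero, Matrix.cons_val_one, Matrix.head_cons,
    swap2_apply0, swap2_apply1, algebraMap_eq]
  ring

lemma rho2_monomial (lam : F) (d : Fin 2 →₀ ℕ) (c : F) :
    rho2 F lam (monomial d c) = monomial d (lam ^ d 0 * lam⁻¹ ^ d 1 * c) := by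
  rw [rho2, aeval_monomial, monomial_eq,
    Finsupp.prod_fintype _ _ (fun i => pow_zero _),
    Finsupp.prod_fintype _ _ (fun i => pow_zero _)]
  simp only [Fin.prod_univ_two, Matrix.cons_val_zero, Matrix.cons_val_one, Matrix.head_cons,
    algebraMap_eq, mul_pow, ← C_pow, C_mul]
  ring

lemma coeff_sig2 (f : MvPolynomial (Fin 2) F) (d : Fin 2 →₀ ℕ) :
    coeff d (sig2 F f) = coeff (swap2 d) f := by
  conv_lhs => rw [f.as_sum, map_sum]
  rw [coeff_sum]
  simp only [sig2_monomial, coeff_monomial]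
  have : ∀ e : Fin 2 →₀ ℕ, (swap2 e = d) ↔ (e = swap2 d) := by
    intro e
    constructor
    · rintro rfl; rw [swap2_swap2]
    · rintro rfl; rw [swap2_swap2]
  simp_rw [this]
  rw [Finset.sum_ite_eq' f.support (swap2 d) (fun e => coeff e f)]
  split_ifs with h
  · rfl
  · exact (MvPolynomial.notMem_support_iff.mp h).symm

lemma coeff_rho2 (lam : F) (f : MvPolynomial (Fin 2) F) (d : Fin 2 →₀ ℕ) :
    coeff d (rho2 F lam f) = lam ^ d 0 * lam⁻¹ ^ d 1 * coeff d f := by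
  conv_lhs => rw [f.as_sum, map_sum]
  rw [coeff_sum]
  simp only [rho2_monomial, coeff_monomial]
  rw [Finset.sum_ite_eq' f.support d]
  split_ifs with h
  · rfl
  · rw [(MvPolynomial.notMem_support_iff.mp h), mul_zero]

/-- generator coefficient vanishing -/
lemma gen_coeff_single (hlam : IsPrimitiveRoot lam p)
    {g : MvPolynomial (Fin 2) F}
    (hg : sig2 F g = g ∧ rho2 F lam g = g ∧ constantCoeff g = 0)
    (i : Fin 2) {j : ℕ} (hj : j < p) : coeff (Finsupp.single i j) g = 0 := by
  rcases Nat.eq_zero_or_pos j with rfl | hj0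
  · rw [Finsupp.single_zero]
    exact hg.2.2
  by_contra hne
  have h := congrArg (coeff (Finsupp.single i j)) hg.2.1
  rw [coeff_rho2] at h
  have hpow : lam ^ (Finsupp.single i j) 0 * lam⁻¹ ^ (Finsupp.single i j) 1 = 1 :=
    mul_right_cancel₀ hne (h.trans (one_mul _).symm)
  fin_cases i <;>
    simp only [Finsupp.single_apply, if_pos, if_neg, pow_zero, one_mul, mul_one,
      inv_pow, inv_eq_one, Fin.isValue, reduceIte, Fin.zero_eta, Fin.mk_one,
      zero_ne_one, one_ne_zero, ite_true, ite_false] at hpow <;>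
    exact hlam.pow_ne_one_of_pos_of_lt hj0.ne' hj hpow

lemma gen_coeff_symm {g : MvPolynomial (Fin 2) F}
    (hg : sig2 F g = g ∧ rho2 F lam g = g ∧ constantCoeff g = 0) (d : Fin 2 →₀ ℕ) :
    coeff d g = coeff (swap2 d) g := by
  conv_lhs => rw [← hg.1, coeff_sig2]

lemma single_add_decomp {i : Fin 2} {n : ℕ} {u v : Fin 2 →₀ ℕ}
    (h : u + v = Finsupp.single i n) :
    v = Finsupp.single i (v i) ∧ v i ≤ n ∧ u = Finsupp.single i (n - v i) := by
  have happ : ∀ m : Fin 2, u m + v m = Finsupp.single i n m := fun m => by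
    rw [← h]; rfl
  have hi := happ i
  rw [Finsupp.single_eq_same] at hi
  refine ⟨?_, ?_, ?_⟩
  · ext m
    by_cases hm : m = i
    · subst hm; rw [Finsupp.single_eq_same]
    · have := happ m
      rw [Finsupp.single_eq_of_ne' (Ne.symm hm)] at this
      rw [Finsupp.single_eq_of_ne' (Ne.symm hm)]
      omega
  · omega
  · ext m
    by_cases hm : m = i
    · subst hm; rw [Finsupp.single_eq_same]; omega
    · have := happ m
      rw [Finsupp.single_eq_of_ne' (Ne.symm hm)] at this
      rw [Finsupp.single_eq_of_ne' (Ne.symm hm)]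
      omega

/-- the key vanishing properties, stated for products -/
lemma prod_coeff (hlam : IsPrimitiveRoot lam p)
    {g : MvPolynomial (Fin 2) F}
    (hg : sig2 F g = g ∧ rho2 F lam g = g ∧ constantCoeff g = 0)
    (r : MvPolynomial (Fin 2) F) :
    (∀ i : Fin 2, ∀ j < p, coeff (Finsupp.single i j) (r * g) = 0) ∧
      coeff (Finsupp.single 0 p) (r * g) = coeff (Finsupp.single 1 p) (r * g) := by
  constructor
  · intro i j hj
    rw [coeff_mul]
    apply Finset.sum_eq_zero
    rintro ⟨u, v⟩ huv
    rw [Finset.HasAntidiagonal.mem_antidiagonal] at huv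
    dsimp only at huv
    obtain ⟨hv, hvi, -⟩ := single_add_decomp huv
    have : coeff v g = 0 := by
      rw [hv]
      exact gen_coeff_single hlam hg i (lt_of_le_of_lt hvi hj)
    simp [this]
  · have key : ∀ i : Fin 2, coeff (Finsupp.single i p) (r * g) =
        constantCoeff r * coeff (Finsupp.single i p) g := by
      intro i
      rw [coeff_mul]
      rw [Finset.sum_eq_single ((0 : Fin 2 →₀ ℕ), Finsupp.single i p)]
      · simp [constantCoeff_eq]
      · rintro ⟨u, v⟩ huv hne
        rw [Finset.HasAntidiagonal.mem_antidiagonal] at huv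
        dsimp only at huv
        obtain ⟨hv, hvi, hu⟩ := single_add_decomp huv
        rcases eq_or_lt_of_le hvi with heq | hlt
        · exfalso
          apply hne
          have hv' : v = Finsupp.single i p := by rw [hv, ← heq]
          have hu' : u = 0 := by rw [hu, ← heq, Nat.sub_self, Finsupp.single_zero]
          rw [hv', hu']
        · have : coeff v g = 0 := by
            rw [hv]
            exact gen_coeff_single hlam hg i hlt
          simp [this]
      · intro hmem
        exfalso
        apply hmem
        rw [Finset.HasAntidiagonal.mem_antidiagonal, zero_add]
    rw [key 0, key 1, gen_coeff_symm hg (Finsupp.single 0 p)]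
    congr 2
    apply fin2_finsupp_ext <;> simp [Finsupp.single_apply]

lemma hilbert_coeff (hlam : IsPrimitiveRoot lam p)
    {f : MvPolynomial (Fin 2) F} (hf : f ∈ HilbertIdeal2 F lam) :
    (∀ i : Fin 2, ∀ j < p, coeff (Finsupp.single i j) f = 0) ∧
      coeff (Finsupp.single 0 p) f = coeff (Finsupp.single 1 p) f := by
  have main : ∀ r : MvPolynomial (Fin 2) F,
      (∀ i : Fin 2, ∀ j < p, coeff (Finsupp.single i j) (r * f) = 0) ∧
        coeff (Finsupp.single 0 p) (r * f) = coeff (Finsupp.single 1 p) (r * f) := by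
    refine Submodule.span_induction ?_ ?_ ?_ ?_ hf
    · intro g hg r
      exact prod_coeff hlam hg r
    · intro r
      simp
    · intro a b _ _ ha hb r
      have h1 := ha r
      have h2 := hb r
      constructor
      · intro i j hj
        rw [mul_add, coeff_add, (h1.1 i j hj), (h2.1 i j hj), add_zero]
      · rw [mul_add, coeff_add, coeff_add, h1.2, h2.2]
    · intro a b _ hb r
      have h1 := hb (r * a)
      simpa [smul_eq_mul, mul_assoc, mul_comm, mul_left_comm] using h1
  simpa using main 1

/-! ### Membership of the three explicit elements -/

lemma mem_xy (hp : p ≠ 0) (hlam : IsPrimitiveRoot lam p) :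
    (X 0 * X 1 : MvPolynomial (Fin 2) F) ∈ HilbertIdeal2 F lam := by
  apply Ideal.subset_span
  refine ⟨?_, ?_, ?_⟩
  · simp [sig2, mul_comm]
  · have h : lam * lam⁻¹ = 1 := mul_inv_cancel₀ (hlam.ne_zero hp)
    simp only [rho2, map_mul, aeval_X, Matrix.cons_val_zero, Matrix.cons_val_one,
      Matrix.head_cons]
    rw [show (C lam * X 0) * (C lam⁻¹ * X 1) =
      C (lam * lam⁻¹) * (X 0 * X 1 : MvPolynomial (Fin 2) F) by rw [C_mul]; ring, h]
    simp
  · simp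

lemma mem_xpyp (hp : p ≠ 0) (hlam : IsPrimitiveRoot lam p) :
    (X 0 ^ p + X 1 ^ p : MvPolynomial (Fin 2) F) ∈ HilbertIdeal2 F lam := by
  apply Ideal.subset_span
  have h1 : lam ^ p = 1 := hlam.pow_eq_one
  have h2 : lam⁻¹ ^ p = 1 := by rw [inv_pow, h1, inv_one]
  refine ⟨?_, ?_, ?_⟩
  · simp [sig2, add_comm]
  · simp only [rho2, map_add, map_pow, aeval_X, Matrix.cons_val_zero, Matrix.cons_val_one,
      Matrix.head_cons, mul_pow, ← C_pow, h1, h2, map_one, one_mul]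
  · simp [zero_pow hp]

lemma mem_yp1 [CharP F 2] (hp : p ≠ 0) (hlam : IsPrimitiveRoot lam p) :
    (X 1 ^ (p + 1) : MvPolynomial (Fin 2) F) ∈ HilbertIdeal2 F lam := by
  obtain ⟨k, rfl⟩ : ∃ k, p = k + 1 := ⟨p - 1, by omega⟩
  have h2 : (2 : MvPolynomial (Fin 2) F) = 0 := by
    have := CharP.cast_eq_zero (MvPolynomial (Fin 2) F) 2
    exact_mod_cast this
  have hid : (X 1 ^ (k + 1 + 1) : MvPolynomial (Fin 2) F) =
      X 1 * (X 0 ^ (k + 1) + X 1 ^ (k + 1)) + X 0 ^ k * (X 0 * X 1) := by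
    linear_combination (-(X 0 ^ (k + 1) * X 1) : MvPolynomial (Fin 2) F) * h2
  rw [hid]
  exact Ideal.add_mem _ (Ideal.mul_mem_left _ _ (mem_xpyp hp hlam))
    (Ideal.mul_mem_left _ _ (mem_xy hp hlam))

/-! ### lmExp computations -/

lemma lmExp_monomial {d : Fin 2 →₀ ℕ} {c : F} (hc : c ≠ 0) :
    lmExp MonomialOrder.lex (monomial d c) = d := by
  classical
  rw [lmExp, support_monomial, if_neg hc, Finset.sup_singleton, AddEquiv.symm_apply_apply]

lemma lex_single_lt (m n : ℕ) (hn : 0 < n) :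
    MonomialOrder.lex.toSyn (Finsupp.single (1 : Fin 2) m) <
      MonomialOrder.lex.toSyn (Finsupp.single (0 : Fin 2) n) := by
  rw [MonomialOrder.lex_lt_iff, Finsupp.Lex.lt_iff]
  refine ⟨0, fun j hj => absurd hj (by omega), ?_⟩
  simpa using hn

lemma support_xpyp (hp : p ≠ 0) :
    (X 0 ^ p + X 1 ^ p : MvPolynomial (Fin 2) F).support =
      {Finsupp.single 0 p, Finsupp.single 1 p} := by
  have hne : (Finsupp.single (0 : Fin 2) p) ≠ Finsupp.single 1 p := by
    intro h
    have := congrArg (fun d : Fin 2 →₀ ℕ => d 0) h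
    simp [Finsupp.single_apply] at this
    omega
  rw [X_pow_eq_monomial, X_pow_eq_monomial]
  ext d
  rw [mem_support_iff, coeff_add, coeff_monomial, coeff_monomial]
  constructor
  · intro h
    by_cases h0 : Finsupp.single (0 : Fin 2) p = d
    · simp [h0]
    · by_cases h1 : Finsupp.single (1 : Fin 2) p = d
      · simp [h1]
      · simp [h0, h1] at h
  · intro h
    rcases Finset.mem_insert.mp h with rfl | h
    · rw [if_pos rfl, if_neg (Ne.symm hne)]
      simp
    · rw [Finset.mem_singleton] at h
      subst h
      rw [if_neg hne, if_pos rfl]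
      simp

lemma xpyp_ne_zero (hp : p ≠ 0) : (X 0 ^ p + X 1 ^ p : MvPolynomial (Fin 2) F) ≠ 0 := by
  intro h
  have := support_xpyp (F := F) hp
  rw [h, MvPolynomial.support_zero] at this
  have : (Finsupp.single (0 : Fin 2) p) ∈ (∅ : Finset (Fin 2 →₀ ℕ)) := by
    rw [this]; simp
  simp at this

lemma lmExp_xpyp (hp : p ≠ 0) :
    lmExp MonomialOrder.lex (X 0 ^ p + X 1 ^ p : MvPolynomial (Fin 2) F) =
      Finsupp.single 0 p := by
  rw [lmExp, support_xpyp hp, Finset.sup_insert, Finset.sup_singleton,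
    sup_eq_left.mpr (le_of_lt (lex_single_lt p p (Nat.pos_of_ne_zero hp)))]
  exact AddEquiv.symm_apply_apply _ _

lemma lex_le_single1 {d : Fin 2 →₀ ℕ} {n : ℕ}
    (h : MonomialOrder.lex.toSyn d ≤ MonomialOrder.lex.toSyn (Finsupp.single (1 : Fin 2) n)) :
    d 0 = 0 ∧ d 1 ≤ n := by
  rw [MonomialOrder.lex_le_iff, le_iff_eq_or_lt, Finsupp.Lex.lt_iff] at h
  rcases h with h | ⟨i, hj, hi⟩
  · have : d = Finsupp.single 1 n := by
      exact_mod_cast congrArg (fun x => (ofLex x : Fin 2 →₀ ℕ)) h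
    subst this
    simp [Finsupp.single_apply]
  · fin_cases i
    · simp only [ofLex_toLex, Fin.zero_eta, Fin.isValue] at hi
      rw [Finsupp.single_apply] at hi
      norm_num at hi
    · have h0 := hj 0 (by norm_num)
      simp only [ofLex_toLex, Fin.mk_one, Fin.isValue] at h0 hi
      rw [Finsupp.single_apply] at h0 hi
      norm_num at h0 hi
      exact ⟨h0, le_of_lt hi⟩

lemma lmExp_mem_support {f : MvPolynomial (Fin 2) F} (hf : f ≠ 0) :
    lmExp MonomialOrder.lex f ∈ f.support := by
  obtain ⟨d, hd, hsup⟩ := Finset.exists_mem_eq_sup f.support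
    (support_nonempty.mpr hf) (fun d => MonomialOrder.lex.toSyn d)
  rw [lmExp, hsup, AddEquiv.symm_apply_apply]
  exact hd

lemma le_lmExp {f : MvPolynomial (Fin 2) F} {d : Fin 2 →₀ ℕ} (hd : d ∈ f.support) :
    MonomialOrder.lex.toSyn d ≤ MonomialOrder.lex.toSyn (lmExp MonomialOrder.lex f) := by
  rw [lmExp, AddEquiv.apply_symm_apply]
  exact Finset.le_sup hd

end Aux

/-- For the lexicographic order on `F[x,y]` with `x = X 0 > y = X 1`, the lead
term ideal of the Hilbert ideal `I_H` is minimally generated by `xy`, `x^p` and `y^(p+1)`;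
in particular every Gröbner basis of `I_H` for this order contains an element of degree
`p + 1`. -/
theorem leadTermIdeal_hilbertIdeal_two_var
    {F : Type*} [Field F] [CharP F 2] {p : ℕ} (hp : p.Prime) (hodd : Odd p)
    (lam : F) (hlam : IsPrimitiveRoot lam p) :
    Ideal.span ((fun f : MvPolynomial (Fin 2) F =>
        (monomial (lmExp MonomialOrder.lex f) 1 : MvPolynomial (Fin 2) F)) ''
        {f | f ∈ HilbertIdeal2 F lam ∧ f ≠ 0}) =
      Ideal.span {(X 0 * X 1 : MvPolynomial (Fin 2) F),
        (X 0 : MvPolynomial (Fin 2) F) ^ p, (X 1 : MvPolynomial (Fin 2) F) ^ (p + 1)} ∧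
    ((X 0 * X 1 : MvPolynomial (Fin 2) F) ∉
        Ideal.span {(X 0 : MvPolynomial (Fin 2) F) ^ p,
          (X 1 : MvPolynomial (Fin 2) F) ^ (p + 1)} ∧
      (X 0 : MvPolynomial (Fin 2) F) ^ p ∉
        Ideal.span {(X 0 * X 1 : MvPolynomial (Fin 2) F),
          (X 1 : MvPolynomial (Fin 2) F) ^ (p + 1)} ∧
      (X 1 : MvPolynomial (Fin 2) F) ^ (p + 1) ∉
        Ideal.span {(X 0 * X 1 : MvPolynomial (Fin 2) F),
          (X 0 : MvPolynomial (Fin 2) F) ^ p}) ∧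
    ∀ 𝒢 : Set (MvPolynomial (Fin 2) F),
      Ideal.span 𝒢 = HilbertIdeal2 F lam →
      (∀ f ∈ HilbertIdeal2 F lam, f ≠ 0 → ∃ g ∈ 𝒢, g ≠ 0 ∧
        (monomial (lmExp MonomialOrder.lex g) 1 : MvPolynomial (Fin 2) F) ∣
          monomial (lmExp MonomialOrder.lex f) 1) →
      ∃ g ∈ 𝒢, g.totalDegree = p + 1 := by
  classical
  have hp0 : p ≠ 0 := hp.ne_zero
  have hp2 : 2 ≤ p := hp.two_le
  -- exponent vectors
  set E1 : Fin 2 →₀ ℕ := Finsupp.single 0 1 + Finsupp.single 1 1 with hE1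
  set E2 : Fin 2 →₀ ℕ := Finsupp.single 0 p with hE2
  set E3 : Fin 2 →₀ ℕ := Finsupp.single 1 (p + 1) with hE3
  have hE1app0 : E1 0 = 1 := by simp [hE1, Finsupp.single_apply]
  have hE1app1 : E1 1 = 1 := by simp [hE1, Finsupp.single_apply]
  have hE2app0 : E2 0 = p := by simp [hE2, Finsupp.single_apply]
  have hE2app1 : E2 1 = 0 := by simp [hE2, Finsupp.single_apply]
  have hE3app0 : E3 0 = 0 := by simp [hE3, Finsupp.single_apply]
  have hE3app1 : E3 1 = p + 1 := by simp [hE3, Finsupp.single_apply]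
  have hxy : (X 0 * X 1 : MvPolynomial (Fin 2) F) = monomial E1 1 := by
    rw [hE1, X, X, monomial_mul, one_mul]
  have hxp : (X 0 ^ p : MvPolynomial (Fin 2) F) = monomial E2 1 := X_pow_eq_monomial
  have hyp1 : (X 1 ^ (p + 1) : MvPolynomial (Fin 2) F) = monomial E3 1 := X_pow_eq_monomial
  have hset : ({(X 0 * X 1 : MvPolynomial (Fin 2) F), X 0 ^ p, X 1 ^ (p + 1)} :
      Set (MvPolynomial (Fin 2) F)) =
      (fun s => monomial s (1 : F)) '' {E1, E2, E3} := by
    rw [Set.image_insert_eq, Set.image_insert_eq, Set.image_singleton, hxy, hxp, hyp1]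
  have hset23 : ({(X 0 ^ p : MvPolynomial (Fin 2) F), X 1 ^ (p + 1)} :
      Set (MvPolynomial (Fin 2) F)) = (fun s => monomial s (1 : F)) '' {E2, E3} := by
    rw [Set.image_insert_eq, Set.image_singleton, hxp, hyp1]
  have hset13 : ({(X 0 * X 1 : MvPolynomial (Fin 2) F), X 1 ^ (p + 1)} :
      Set (MvPolynomial (Fin 2) F)) = (fun s => monomial s (1 : F)) '' {E1, E3} := by
    rw [Set.image_insert_eq, Set.image_singleton, hxy, hyp1]
  have hset12 : ({(X 0 * X 1 : MvPolynomial (Fin 2) F), X 0 ^ p} :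
      Set (MvPolynomial (Fin 2) F)) = (fun s => monomial s (1 : F)) '' {E1, E2} := by
    rw [Set.image_insert_eq, Set.image_singleton, hxy, hxp]
  have hsupp_mono : ∀ (d : Fin 2 →₀ ℕ),
      (monomial d (1 : F)).support = {d} := fun d => by
    rw [support_monomial, if_neg one_ne_zero]
  -- Part A
  have partA : Ideal.span ((fun f : MvPolynomial (Fin 2) F =>
        (monomial (lmExp MonomialOrder.lex f) 1 : MvPolynomial (Fin 2) F)) ''
        {f | f ∈ HilbertIdeal2 F lam ∧ f ≠ 0}) =
      Ideal.span {(X 0 * X 1 : MvPolynomial (Fin 2) F), X 0 ^ p, X 1 ^ (p + 1)} := by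
    apply le_antisymm
    · rw [hset]
      rw [Ideal.span_le]
      rintro t ⟨f, ⟨hfI, hf0⟩, rfl⟩
      rw [SetLike.mem_coe, mem_ideal_span_monomial_image]
      intro xi hxi
      rw [hsupp_mono, Finset.mem_singleton] at hxi
      subst hxi
      set e := lmExp MonomialOrder.lex f with he
      obtain ⟨hcoeffs, hsym⟩ := hilbert_coeff hlam hfI
      have hmem : e ∈ f.support := lmExp_mem_support hf0
      have hce : coeff e f ≠ 0 := mem_support_iff.mp hmem
      by_cases h0 : e 0 = 0
      · by_cases hbig : e 1 ≤ p
        · exfalso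
          rcases lt_or_eq_of_le hbig with hlt | heq
          · apply hce
            rw [show e = Finsupp.single 1 (e 1) from
              fin2_finsupp_ext (by simp [Finsupp.single_apply, h0]) (by simp)]
            exact hcoeffs 1 (e 1) hlt
          · have hee : e = Finsupp.single 1 p := fin2_finsupp_ext
              (by simp [Finsupp.single_apply, h0]) (by simp [Finsupp.single_apply, heq])
            have h1 : coeff (Finsupp.single 0 p) f ≠ 0 := by
              rw [hsym, ← hee]; exact hce
            have h2 := le_lmExp (f := f) (mem_support_iff.mpr h1)
            rw [← he, hee] at h2
            exact absurd h2 (not_le_of_gt (lex_single_lt p p (Nat.pos_of_ne_zero hp0)))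
        · exact ⟨E3, by simp, fin2_le (by rw [hE3app0]; omega) (by rw [hE3app1]; omega)⟩
      · by_cases h1 : e 1 = 0
        · by_cases hap : e 0 < p
          · exfalso
            apply hce
            rw [show e = Finsupp.single 0 (e 0) from
              fin2_finsupp_ext (by simp) (by simp [Finsupp.single_apply, h1])]
            exact hcoeffs 0 (e 0) hap
          · exact ⟨E2, by simp, fin2_le (by rw [hE2app0]; omega) (by rw [hE2app1]; omega)⟩
        · exact ⟨E1, by simp, fin2_le (by rw [hE1app0]; omega) (by rw [hE1app1]; omega)⟩
    · rw [Ideal.span_le]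
      rintro t ht
      have hmemimg : ∀ f : MvPolynomial (Fin 2) F, f ∈ HilbertIdeal2 F lam → f ≠ 0 →
          (monomial (lmExp MonomialOrder.lex f) 1 : MvPolynomial (Fin 2) F) ∈
          Ideal.span ((fun f : MvPolynomial (Fin 2) F =>
            (monomial (lmExp MonomialOrder.lex f) 1 : MvPolynomial (Fin 2) F)) ''
            {f | f ∈ HilbertIdeal2 F lam ∧ f ≠ 0}) := by
        intro f h1 h2
        exact Ideal.subset_span ⟨f, ⟨h1, h2⟩, rfl⟩
      have hxyne : (X 0 * X 1 : MvPolynomial (Fin 2) F) ≠ 0 := by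
        rw [hxy]
        intro h
        exact one_ne_zero (monomial_eq_zero.mp h)
      have hypne : (X 1 ^ (p + 1) : MvPolynomial (Fin 2) F) ≠ 0 := by
        rw [hyp1]
        intro h
        exact one_ne_zero (monomial_eq_zero.mp h)
      simp only [Set.mem_insert_iff, Set.mem_singleton_iff] at ht
      rcases ht with rfl | rfl | rfl
      · have := hmemimg (X 0 * X 1) (mem_xy hp0 hlam) hxyne
        rwa [hxy, lmExp_monomial one_ne_zero, ← hxy] at this
      · have := hmemimg (X 0 ^ p + X 1 ^ p) (mem_xpyp hp0 hlam) (xpyp_ne_zero hp0)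
        rwa [lmExp_xpyp hp0, ← hE2, ← hxp] at this
      · have := hmemimg (X 1 ^ (p + 1)) (mem_yp1 hp0 hlam) hypne
        rwa [hyp1, lmExp_monomial one_ne_zero, ← hyp1] at this
  refine ⟨partA, ⟨?_, ?_, ?_⟩, ?_⟩
  -- minimality 1 : xy ∉ (x^p, y^{p+1})
  · rw [hset23, hxy]
    intro hmem
    rw [mem_ideal_span_monomial_image] at hmem
    obtain ⟨si, hsi, hle⟩ := hmem E1 (by rw [hsupp_mono]; simp)
    rw [Finsupp.le_def] at hle
    rcases hsi with rfl | hsi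
    · have := hle 0
      rw [hE2app0, hE1app0] at this
      omega
    · rw [Set.mem_singleton_iff] at hsi
      subst hsi
      have := hle 1
      rw [hE3app1, hE1app1] at this
      omega
  -- minimality 2 : x^p ∉ (xy, y^{p+1})
  · rw [hset13, hxp]
    intro hmem
    rw [mem_ideal_span_monomial_image] at hmem
    obtain ⟨si, hsi, hle⟩ := hmem E2 (by rw [hsupp_mono]; simp)
    rw [Finsupp.le_def] at hle
    rcases hsi with rfl | hsi
    · have := hle 1
      rw [hE1app1, hE2app1] at this
      omega
    · rw [Set.mem_singleton_iff] at hsi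
      subst hsi
      have := hle 1
      rw [hE3app1, hE2app1] at this
      omega
  -- minimality 3 : y^{p+1} ∉ (xy, x^p)
  · rw [hset12, hyp1]
    intro hmem
    rw [mem_ideal_span_monomial_image] at hmem
    obtain ⟨si, hsi, hle⟩ := hmem E3 (by rw [hsupp_mono]; simp)
    rw [Finsupp.le_def] at hle
    rcases hsi with rfl | hsi
    · have := hle 0
      rw [hE1app0, hE3app0] at this
      omega
    · rw [Set.mem_singleton_iff] at hsi
      subst hsi
      have := hle 0
      rw [hE2app0, hE3app0] at this
      omega
  -- Part C : Gröbner bases contain an element of degree p + 1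
  · intro 𝒢 hspan hGB
    have hy : (X 1 ^ (p + 1) : MvPolynomial (Fin 2) F) ∈ HilbertIdeal2 F lam :=
      mem_yp1 hp0 hlam
    have hyne : (X 1 ^ (p + 1) : MvPolynomial (Fin 2) F) ≠ 0 := by
      rw [hyp1]; exact fun h => one_ne_zero (monomial_eq_zero.mp h)
    obtain ⟨g, hg𝒢, hgne, hdvd⟩ := hGB _ hy hyne
    refine ⟨g, hg𝒢, ?_⟩
    have hgI : g ∈ HilbertIdeal2 F lam := by
      rw [← hspan]; exact Ideal.subset_span hg𝒢
    have hlmy : lmExp MonomialOrder.lex (X 1 ^ (p + 1) : MvPolynomial (Fin 2) F) = E3 := by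
      rw [hyp1, lmExp_monomial one_ne_zero]
    rw [hlmy] at hdvd
    set eg := lmExp MonomialOrder.lex g with heg
    have hle : eg ≤ E3 := by
      rcases (monomial_dvd_monomial.mp hdvd).1 with h | h
      · exact absurd h one_ne_zero
      · exact h
    rw [Finsupp.le_def] at hle
    have heg0 : eg 0 = 0 := by have := hle 0; rw [hE3app0] at this; omega
    have heg1 : eg 1 ≤ p + 1 := by have := hle 1; rw [hE3app1] at this; omega
    -- eg is in the lead term ideal
    have hmemJ : (monomial eg 1 : MvPolynomial (Fin 2) F) ∈
        Ideal.span ((fun s => monomial s (1 : F)) '' {E1, E2, E3}) := by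
      rw [← hset, ← partA]
      exact Ideal.subset_span ⟨g, ⟨hgI, hgne⟩, rfl⟩
    rw [mem_ideal_span_monomial_image] at hmemJ
    obtain ⟨si, hsi, hsile⟩ := hmemJ eg (by rw [hsupp_mono]; simp)
    rw [Finsupp.le_def] at hsile
    have hegE3 : eg = E3 := by
      rcases hsi with rfl | rfl | hsi
      · exfalso
        have := hsile 0
        rw [hE1app0, heg0] at this
        omega
      · exfalso
        have := hsile 0
        rw [hE2app0, heg0] at this
        omega
      · rw [Set.mem_singleton_iff] at hsi
        subst hsi
        have h1 := hsile 1
        rw [hE3app1] at h1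
        exact fin2_finsupp_ext (by rw [heg0, hE3app0]) (by omega)
    -- total degree computation
    have hsupmem : eg ∈ g.support := lmExp_mem_support hgne
    apply le_antisymm
    · rw [totalDegree]
      apply Finset.sup_le
      intro d hd
      have hlex := le_lmExp (f := g) hd
      rw [← heg, hegE3, hE3] at hlex
      obtain ⟨hd0, hd1⟩ := lex_le_single1 hlex
      have hdsum : (d.sum fun _ n => n) = d 0 + d 1 := by
        rw [Finsupp.sum_fintype _ _ (fun i => rfl), Fin.sum_univ_two]
      rw [hdsum, hd0]
      omega
    · have : (eg.sum fun _ n => n) ≤ g.totalDegree := MvPolynomial.le_totalDegree hsupmem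
      have hegsum : (eg.sum fun _ n => n) = p + 1 := by
        rw [Finsupp.sum_fintype _ _ (fun i => rfl), Fin.sum_univ_two, hegE3,
          hE3app0, hE3app1]
        omega
      omega
end
end

section
/- Let p be an odd prime. Every element of the Hilbert ideal I_H ⊆ F[x,y] of total degree less than p is divisible by xy. Consequently, I_H is not generated by invariants of degree less than p, so the bound p (in the statement that the Hilbert ideal is generated by invariants of positive degree at most p) is sharp. -/
open MvPolynomial

noncomputable section

lemma aux_coeff_scale {F : Type*} [Field F] (a b : F) (f : MvPolynomial (Fin 2) F)
    (m : Fin 2 →₀ ℕ) :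
    coeff m (aeval ![C a * X 0, C b * X 1] f) = a ^ m 0 * b ^ m 1 * coeff m f := by
  induction f using MvPolynomial.induction_on' with
  | add p q hp hq => simp only [map_add, coeff_add, hp, hq]; ring
  | monomial u r =>
    rw [aeval_monomial]
    have h1 : (u.prod fun i e => (![C a * X 0, C b * X 1] : Fin 2 → MvPolynomial (Fin 2) F) i ^ e)
        = C (a ^ u 0 * b ^ u 1) * monomial u 1 := by
      have e1 : (u.prod fun i e => (![C a * X 0, C b * X 1] : Fin 2 → MvPolynomial (Fin 2) F) i ^ e)
          = u.prod fun i e => C ((![a, b] : Fin 2 → F) i) ^ e * X i ^ e :=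
        Finsupp.prod_congr fun i _ => by fin_cases i <;> simp [mul_pow]
      rw [e1, Finsupp.prod_mul]
      congr 1
      · rw [Finsupp.prod_fintype _ _ (fun i => pow_zero _), Fin.prod_univ_two]
        simp only [Matrix.cons_val_zero, Matrix.cons_val_one, Matrix.head_cons, ← C_pow, ← C_mul]
      · rw [monomial_eq, C_1, one_mul]
    rw [h1, algebraMap_eq, ← mul_assoc, ← C_mul, C_mul_monomial, coeff_monomial, coeff_monomial]
    split_ifs with h
    · subst h; ring
    · ring


lemma aux_support_modeq {F : Type*} [Field F] {p : ℕ} (hp : p ≠ 0) {lam : F}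
    (hlam : IsPrimitiveRoot lam p) {f : MvPolynomial (Fin 2) F}
    (hρ : rho2 F lam f = f) {m : Fin 2 →₀ ℕ} (hm : m ∈ f.support) :
    m 0 ≡ m 1 [MOD p] := by
  have hc : coeff m f ≠ 0 := mem_support_iff.mp hm
  have h0 : lam ≠ 0 := hlam.ne_zero hp
  have h := congrArg (coeff m) hρ
  rw [rho2, aux_coeff_scale] at h
  have h1 : lam ^ m 0 * lam⁻¹ ^ m 1 = 1 :=
    mul_right_cancel₀ hc (h.trans (one_mul _).symm)
  rw [inv_pow, mul_inv_eq_one₀ (pow_ne_zero _ h0)] at h1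
  have key : ∀ a b : ℕ, a ≤ b → lam ^ a = lam ^ b → a ≡ b [MOD p] := by
    intro a b hab he
    have hpow : lam ^ a * lam ^ (b - a) = lam ^ a * 1 := by
      rw [mul_one, ← pow_add, Nat.add_sub_cancel' hab]
      exact he.symm
    have h2 := mul_left_cancel₀ (pow_ne_zero a h0) hpow
    exact ((Nat.modEq_iff_dvd' hab).mpr ((hlam.pow_eq_one_iff_dvd _).mp h2))
  rcases le_total (m 0) (m 1) with hle | hle
  · exact key _ _ hle h1
  · exact (key _ _ hle h1.symm).symm

lemma aux_dvd_of_support {F : Type*} [Field F] {f : MvPolynomial (Fin 2) F}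
    (h : ∀ m ∈ f.support, 1 ≤ m 0 ∧ 1 ≤ m 1) :
    (X 0 * X 1 : MvPolynomial (Fin 2) F) ∣ f := by
  classical
  have hxy : (X 0 * X 1 : MvPolynomial (Fin 2) F)
      = monomial (Finsupp.single 0 1 + Finsupp.single 1 1) 1 := by
    rw [X, X, monomial_mul, one_mul]
  have hdvd : (X 0 * X 1 : MvPolynomial (Fin 2) F) ∣
      ∑ m ∈ f.support, monomial m (coeff m f) := by
    refine Finset.dvd_sum fun m hm => ?_
    rw [hxy]
    refine monomial_dvd_monomial.mpr ⟨Or.inr ?_, one_dvd _⟩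
    rw [Finsupp.le_def]
    intro i
    obtain ⟨h0, h1⟩ := h m hm
    fin_cases i <;> simp [Finsupp.single_apply] <;> omega
  rwa [← as_sum] at hdvd

/-- Every element of the Hilbert ideal `I_H ⊆ F[x,y]` of total degree less
than `p` is divisible by `xy`; consequently `I_H` is not generated by the invariants of
degree less than `p`, so the bound `p` is sharp. -/
theorem hilbertIdeal_two_var_degree_bound_sharp
    {F : Type*} [Field F] [CharP F 2] {p : ℕ} (hp : p.Prime) (hodd : Odd p)
    (lam : F) (hlam : IsPrimitiveRoot lam p) :
    (∀ f ∈ HilbertIdeal2 F lam, f.totalDegree < p →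
      (X 0 * X 1 : MvPolynomial (Fin 2) F) ∣ f) ∧
    HilbertIdeal2 F lam ≠
      Ideal.span {f : MvPolynomial (Fin 2) F |
        sig2 F f = f ∧ rho2 F lam f = f ∧ constantCoeff f = 0 ∧ f.totalDegree < p} := by
  classical
  have hp0 : p ≠ 0 := hp.ne_zero
  -- generators have all low-degree monomials divisible by xy
  have hgen : ∀ f : MvPolynomial (Fin 2) F, rho2 F lam f = f → constantCoeff f = 0 →
      ∀ m ∈ f.support, m 0 + m 1 < p → 1 ≤ m 0 ∧ 1 ≤ m 1 := by
    intro f hρ h0 m hm hlt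
    have hmod := aux_support_modeq hp0 hlam hρ hm
    have hne : m ≠ 0 := by
      rintro rfl
      exact mem_support_iff.mp hm (by simpa [constantCoeff_eq] using h0)
    have heq : m 0 = m 1 := by
      rcases le_total (m 0) (m 1) with hle | hle
      · rcases Nat.eq_zero_or_pos (m 1 - m 0) with h | h
        · omega
        · have hd := (Nat.modEq_iff_dvd' hle).mp hmod
          have := Nat.le_of_dvd h hd
          omega
      · rcases Nat.eq_zero_or_pos (m 0 - m 1) with h | h
        · omega
        · have hd := (Nat.modEq_iff_dvd' hle).mp hmod.symm
          have := Nat.le_of_dvd h hd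
          omega
    have hpos : 1 ≤ m 0 := by
      by_contra hcon
      apply hne
      have h00 : m 0 = 0 := by omega
      have h11 : m 1 = 0 := by omega
      ext i
      fin_cases i
      · simpa using h00
      · simpa using h11
    exact ⟨hpos, heq ▸ hpos⟩
  have key : ∀ f ∈ HilbertIdeal2 F lam,
      ∀ m ∈ f.support, m 0 + m 1 < p → 1 ≤ m 0 ∧ 1 ≤ m 1 := by
    intro f hf
    induction hf using Submodule.span_induction with
    | mem g hg => exact hgen g hg.2.1 hg.2.2
    | zero => simp
    | add x y hx hy ihx ihy =>
      intro m hm hlt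
      rcases Finset.mem_union.mp (support_add hm) with h | h
      · exact ihx m h hlt
      · exact ihy m h hlt
    | smul r x hx ih =>
      intro m hm hlt
      have hm' : m ∈ (r * x).support := by simpa [smul_eq_mul] using hm
      obtain ⟨a, b, hb, rfl⟩ : ∃ a b, b ∈ x.support ∧ m = a + b := by
        have := support_mul r x hm'
        rw [Finset.mem_add] at this
        obtain ⟨a, ha, b, hb, habm⟩ := this
        exact ⟨a, b, hb, habm.symm⟩
      have := ih b hb (by simp only [Finsupp.add_apply] at hlt ⊢; omega)
      simp only [Finsupp.add_apply]
      omega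
  have hsum : ∀ (f : MvPolynomial (Fin 2) F) (m : Fin 2 →₀ ℕ), m ∈ f.support →
      m 0 + m 1 ≤ f.totalDegree := by
    intro f m hm
    have h := le_totalDegree hm
    rwa [Finsupp.sum_fintype _ _ (fun i => rfl), Fin.sum_univ_two] at h
  constructor
  · intro f hf hdeg
    exact aux_dvd_of_support fun m hm =>
      key f hf m hm (lt_of_le_of_lt (hsum f m hm) hdeg)
  · intro heq
    set w : MvPolynomial (Fin 2) F := X 0 ^ p + X 1 ^ p with hw
    have hσ : sig2 F w = w := by
      simp only [hw, sig2, map_add, map_pow, aeval_X, Matrix.cons_val_zero, Matrix.cons_val_one,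
        Matrix.head_cons]
      ring
    have hρ : rho2 F lam w = w := by
      simp only [hw, rho2, map_add, map_pow, aeval_X, Matrix.cons_val_zero, Matrix.cons_val_one,
        Matrix.head_cons, mul_pow, ← C_pow, hlam.pow_eq_one, inv_pow, inv_one, C_1, one_mul]
    have h0 : constantCoeff w = 0 := by
      simp [hw, zero_pow hp0]
    have hwmem : w ∈ HilbertIdeal2 F lam := Ideal.subset_span ⟨hσ, hρ, h0⟩
    have hdvdall : ∀ u ∈ Ideal.span {f : MvPolynomial (Fin 2) F |
        sig2 F f = f ∧ rho2 F lam f = f ∧ constantCoeff f = 0 ∧ f.totalDegree < p},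
        (X 0 * X 1 : MvPolynomial (Fin 2) F) ∣ u := by
      intro u hu
      induction hu using Submodule.span_induction with
      | mem g hg =>
        refine aux_dvd_of_support fun m hm => ?_
        exact hgen g hg.2.1 hg.2.2.1 m hm (lt_of_le_of_lt (hsum g m hm) hg.2.2.2)
      | zero => exact dvd_zero _
      | add x y hx hy ihx ihy => exact dvd_add ihx ihy
      | smul r x hx ih => exact Dvd.dvd.mul_left ih r
    have hdvd : (X 0 * X 1 : MvPolynomial (Fin 2) F) ∣ w := hdvdall w (heq ▸ hwmem)
    obtain ⟨g, hg⟩ := hdvd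
    have hcoeff : coeff (Finsupp.single 0 p) w = 1 := by
      rw [hw, coeff_add, coeff_X_pow, coeff_X_pow, if_pos rfl, if_neg]
      · ring
      · intro hcon
        have := DFunLike.congr_fun hcon (1 : Fin 2)
        simp [Finsupp.single_apply, hp0] at this
    rw [hg, mul_comm (X 0) (X 1), mul_assoc, coeff_X_mul', if_neg] at hcoeff
    · exact one_ne_zero hcoeff.symm
    · simp [Finsupp.single_apply]
end
end
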